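/- For a submetrizable k_ω-space X the following conditions are equivalent: (1) X is an ANR(k_ω) (whenever X is homeomorphic to a closed subspace of a k_ω-space Y, its image is a retract of some neighborhood in Y); (2) X is an absolute neighborhood extensor for the class of k_ω-spaces; (3) X is an absolute neighborhood extensor for the class of compact metrizable spaces. -/

import Mathlib

open Set Topology TopologicalSpace

universe u v

/-- A `k_ω`-sequence for `X`. -/
def IsKOmegaSeq (X : Type v) [TopologicalSpace X] (C : ℕ → Set X) : Prop :=
  (∀ n, IsCompact (C n)) ∧ Monotone C ∧ (⋃ n, C n) = Set.univ ∧
    ∀ U : Set X, IsOpen U ↔ ∀ n, IsOpen ((Subtype.val ⁻¹' U : Set (C n)))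

/-- A `k_ω`-space: a Hausdorff space which is the direct limit of a `k_ω`-sequence. -/
def IsKOmega (X : Type v) [TopologicalSpace X] : Prop :=
  T2Space X ∧ ∃ C : ℕ → Set X, IsKOmegaSeq X C

/-- A space is submetrizable if its topology is finer than some metrizable topology. -/
def Submetrizable (X : Type v) [t : TopologicalSpace X] : Prop :=
  ∃ m : TopologicalSpace X, t ≤ m ∧ @MetrizableSpace X m

/-- `X` is an absolute neighborhood extensor for the class of spaces satisfying `P`. -/
def IsANEFor (X : Type u) [TopologicalSpace X]
    (P : (A : Type v) → TopologicalSpace A → Prop) : Prop :=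
  ∀ (A : Type v) [tA : TopologicalSpace A], P A tA → ∀ B : Set A, IsClosed B →
    ∀ f : B → X, Continuous f → ∃ N : Set A, IsOpen N ∧ B ⊆ N ∧
      ∃ g : N → X, Continuous g ∧ ∀ (a : A) (hB : a ∈ B) (hN : a ∈ N), g ⟨a, hN⟩ = f ⟨a, hB⟩

/-- `X` is an `ANR(k_ω)`-space: whenever `X` is embedded as a closed subspace of a
`k_ω`-space, it is a retract of a neighborhood. -/
def IsANRkw (X : Type u) [TopologicalSpace X] : Prop :=
  IsKOmega X ∧ ∀ (Y : Type v) [TopologicalSpace Y], IsKOmega Y →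
    ∀ e : X → Y, IsClosedEmbedding e →
      ∃ N : Set Y, (∀ y ∈ Set.range e, N ∈ nhds y) ∧
        ∃ r : N → Y, Continuous r ∧ (∀ z : N, r z ∈ Set.range e) ∧
          ∀ z : N, (z : Y) ∈ Set.range e → r z = (z : Y)

/- ## Helpers -/

private lemma glue_contOn {A X : Type*} [TopologicalSpace A] [TopologicalSpace X]
    {s t : Set A} {u v w : A → X} (hs : IsClosed s) (ht : IsClosed t)
    (hu : ContinuousOn u s) (hv : ContinuousOn v t) (huv : Set.EqOn u v (s ∩ t))
    (hwu : ∀ a ∈ s, w a = u a) (hwv : ∀ a ∈ t, a ∉ s → w a = v a) :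
    ContinuousOn w (s ∪ t) := by
  classical
  have hws : Set.EqOn w u s := fun a ha => hwu a ha
  have hwt : Set.EqOn w v t := by
    intro a ha
    by_cases h : a ∈ s
    · rw [hwu a h]; exact huv ⟨h, ha⟩
    · exact hwv a ha h
  intro a ha
  have h1 : ContinuousWithinAt w s a := by
    by_cases h : a ∈ s
    · exact ((hu a h).congr hws (hws h))
    · exact continuousWithinAt_of_notMem_closure (by rwa [hs.closure_eq])
  have h2 : ContinuousWithinAt w t a := by
    by_cases h : a ∈ t
    · exact ((hv a h).congr hwt (hwt h))
    · exact continuousWithinAt_of_notMem_closure (by rwa [ht.closure_eq])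
  exact h1.union h2

private lemma ane_total {X : Type u} [TopologicalSpace X]
    {P : (A : Type u) → TopologicalSpace A → Prop}
    (hX : IsANEFor.{u, u} X P) (x₀ : X)
    (A : Type u) [tA : TopologicalSpace A] (hA : P A tA)
    (B : Set A) (hB : IsClosed B) (φ : A → X) (hφ : ContinuousOn φ B) :
    ∃ N : Set A, ∃ ψ : A → X, IsOpen N ∧ B ⊆ N ∧ ContinuousOn ψ N ∧ Set.EqOn ψ φ B := by
  classical
  obtain ⟨N, hNo, hBN, g, hg, hgf⟩ :=
    hX A hA B hB (fun b => φ b) (continuousOn_iff_continuous_restrict.1 hφ)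
  refine ⟨N, fun a => if h : a ∈ N then g ⟨a, h⟩ else x₀, hNo, hBN, ?_, ?_⟩
  · rw [continuousOn_iff_continuous_restrict]
    convert hg using 1
    funext z
    simp only [Set.restrict_apply, dif_pos z.2]
  · intro a ha
    simp only [dif_pos (hBN ha)]
    exact hgf a ha (hBN ha)

private lemma kseq_open_iUnion {A : Type*} [TopologicalSpace A] {C : ℕ → Set A}
    (hC : IsKOmegaSeq A C) {P : ℕ → Set A} (hP : ∀ n, IsOpen (P n))
    (hmono : Monotone fun n => P n ∩ C n) : IsOpen (⋃ n, P n ∩ C n) := by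
  obtain ⟨hcomp, hmonoC, hunion, hopen⟩ := hC
  rw [hopen]
  intro k
  have : (Subtype.val ⁻¹' (⋃ n, P n ∩ C n) : Set (C k))
      = Subtype.val ⁻¹' (⋃ n ∈ Set.Ici k, P n) := by
    ext z
    simp only [Set.mem_preimage, Set.mem_iUnion, Set.mem_inter_iff, Set.mem_Ici]
    constructor
    · rintro ⟨n, hPn, hCn⟩
      exact ⟨max n k, ⟨le_max_right _ _, (hmono (le_max_left n k) ⟨hPn, hCn⟩).1⟩⟩
    · rintro ⟨n, hk, hPn⟩
      exact ⟨n, hPn, hmonoC hk z.2⟩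
  rw [this]
  exact (isOpen_biUnion fun n _ => hP n).preimage continuous_subtype_val

/-- Total-function form of being an ANE for compact Hausdorff spaces. -/
private def ANECpt (X : Type u) [TopologicalSpace X] : Prop :=
  ∀ (_ : X) (A : Type u) [tA : TopologicalSpace A], CompactSpace A → T2Space A →
    ∀ B : Set A, IsClosed B → ∀ φ : A → X, ContinuousOn φ B →
      ∃ N : Set A, ∃ ψ : A → X, IsOpen N ∧ B ⊆ N ∧ ContinuousOn ψ N ∧ Set.EqOn ψ φ B

/- ## From compact Hausdorff ANE to k_ω ANE -/

private structure KStage {A X : Type u} [TopologicalSpace A] [TopologicalSpace X]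
    (B : Set A) (φ : A → X) (Cn : Set A) : Type u where
  O : Set A
  M : Set A
  g : A → X
  hO : IsOpen O
  hMC : M ⊆ Cn
  hMcpt : IsCompact M
  hWM : O ∩ Cn ⊆ M
  hg : ContinuousOn g M
  hgφ : Set.EqOn g φ (B ∩ M)

private lemma ane_step {X A : Type u} [TopologicalSpace X] [TopologicalSpace A] [T2Space A]
    (hX : ANECpt X) (x₀ : X) {C : ℕ → Set A} (hCc : ∀ n, IsCompact (C n))
    (hCm : Monotone C) {B : Set A} (hB : IsClosed B) {φ : A → X} (hφ : ContinuousOn φ B)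
    (n : ℕ) (s : KStage B φ (C n)) :
    ∃ s' : KStage B φ (C (n + 1)),
      s.M ⊆ s'.O ∧ B ∩ C (n + 1) ⊆ s'.O ∧ Set.EqOn s'.g s.g s.M := by
  classical
  haveI : CompactSpace (C (n + 1)) := isCompact_iff_compactSpace.1 (hCc (n + 1))
  have hCcl : IsClosed (C (n + 1)) := (hCc (n + 1)).isClosed
  have hMCn1 : s.M ⊆ C (n + 1) := s.hMC.trans (hCm (Nat.le_succ n))
  set D : Set A := s.M ∪ B ∩ C (n + 1) with hD
  have hDcl : IsClosed D := s.hMcpt.isClosed.union (hB.inter hCcl)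
  have hDC : D ⊆ C (n + 1) := union_subset hMCn1 inter_subset_right
  set χ : A → X := fun a => if a ∈ B ∩ C (n + 1) then φ a else s.g a with hχdef
  have hχ : ContinuousOn χ D := by
    rw [hD, union_comm]
    exact glue_contOn (hB.inter hCcl) s.hMcpt.isClosed
      (hφ.mono inter_subset_left) s.hg
      (fun a ha => (s.hgφ ⟨ha.1.1, ha.2⟩).symm)
      (fun a ha => if_pos ha) (fun a _ ha => if_neg ha)
  -- pass to the subtype
  have hB'cl : IsClosed ((Subtype.val ⁻¹' D) : Set (C (n + 1))) :=
    hDcl.preimage continuous_subtype_val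
  have hφ' : ContinuousOn (fun z : C (n + 1) => χ z) (Subtype.val ⁻¹' D) :=
    hχ.comp continuous_subtype_val.continuousOn (fun z hz => hz)
  obtain ⟨N', ψ', hN'o, hB'N', hψ', hψφ'⟩ :=
    hX x₀ (C (n + 1)) inferInstance inferInstance _ hB'cl _ hφ'
  obtain ⟨V, hVo, hDV, hclV⟩ := normal_exists_closure_subset hB'cl hN'o hB'N'
  obtain ⟨O₂, hO₂o, hVeq⟩ := isOpen_induced_iff.1 hVo
  have hDO₂ : D ⊆ O₂ := by
    intro a ha
    have : (⟨a, hDC ha⟩ : C (n + 1)) ∈ V := hDV ha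
    rw [← hVeq] at this
    exact this
  set M' : Set A := closure (O₂ ∩ C (n + 1)) with hM'
  have hM'C : M' ⊆ C (n + 1) := closure_minimal inter_subset_right hCcl
  have hM'cpt : IsCompact M' := (hCc (n + 1)).of_isClosed_subset isClosed_closure hM'C
  -- M' is contained in the image of `closure V`, hence in `N'`
  have himg : Subtype.val '' V = O₂ ∩ C (n + 1) := by
    rw [← hVeq, Subtype.image_preimage_coe, inter_comm]
  have hM'img : M' = Subtype.val '' (closure V) := by
    rw [← hCcl.isClosedEmbedding_subtypeVal.closure_image_eq, himg]
  have hM'N' : ∀ a (h : a ∈ C (n + 1)), a ∈ M' → (⟨a, h⟩ : C (n + 1)) ∈ N' := by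
    intro a h ha
    rw [hM'img] at ha
    obtain ⟨z, hz, hza⟩ := ha
    have : z = ⟨a, h⟩ := Subtype.ext hza
    rw [← this]
    exact hclV hz
  set g' : A → X := fun a => if h : a ∈ C (n + 1) then ψ' ⟨a, h⟩ else x₀ with hg'def
  have hg'M : ∀ (a : A) (ha : a ∈ M'), g' a = ψ' ⟨a, hM'C ha⟩ := by
    intro a ha; simp only [g', dif_pos (hM'C ha)]
  have hg' : ContinuousOn g' M' := by
    rw [continuousOn_iff_continuous_restrict]
    have hc1 : Continuous (fun z : M' => (⟨⟨z.1, hM'C z.2⟩, hM'N' z.1 (hM'C z.2) z.2⟩ : N')) := by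
      apply Continuous.subtype_mk
      exact Continuous.subtype_mk continuous_subtype_val _
    have := (continuousOn_iff_continuous_restrict.1 hψ').comp hc1
    convert this using 1
    funext z
    simp only [Set.restrict_apply, Function.comp_apply, g', dif_pos (hM'C z.2)]
  have hχg' : ∀ a ∈ D, g' a = χ a := by
    intro a ha
    have h1 : a ∈ C (n + 1) := hDC ha
    have h2 : a ∈ M' := subset_closure ⟨hDO₂ ha, h1⟩
    rw [hg'M a h2]
    exact hψφ' (by exact ha)
  refine ⟨⟨O₂, M', g', hO₂o, hM'C, hM'cpt, subset_closure, hg', ?_⟩, ?_, ?_, ?_⟩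
  · -- EqOn g' φ (B ∩ M')
    intro a ha
    have h1 : a ∈ C (n + 1) := hM'C ha.2
    have h2 : a ∈ D := Or.inr ⟨ha.1, h1⟩
    rw [hχg' a h2, hχdef]
    simp only [if_pos (show a ∈ B ∩ C (n + 1) from ⟨ha.1, h1⟩)]
  · exact fun a ha => hDO₂ (Or.inl ha)
  · exact fun a ha => hDO₂ (Or.inr ha)
  · -- EqOn g' s.g s.M
    intro a ha
    show g' a = s.g a
    rw [hχg' a (Or.inl ha), hχdef]
    by_cases h : a ∈ B ∩ C (n + 1)
    · simp only [if_pos h]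
      exact (s.hgφ ⟨h.1, ha⟩).symm
    · simp only [if_neg h]

private lemma aneCpt_to_kOmega {X : Type u} [TopologicalSpace X] (hX : ANECpt X) :
    IsANEFor.{u, u} X fun A tA => @IsKOmega A tA := by
  classical
  intro A tA hA B hB f hf
  obtain ⟨hT2, C, hC⟩ := hA
  haveI := hT2
  by_cases hBe : B = ∅
  · subst hBe
    refine ⟨∅, isOpen_empty, subset_rfl, fun z => absurd z.2 (Set.notMem_empty _), ?_, ?_⟩
    · exact continuous_iff_continuousAt.2 fun z => absurd z.2 (Set.notMem_empty _)
    · intro a hB' _; exact absurd hB' (Set.notMem_empty _)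
  obtain ⟨b₀, hb₀⟩ := Set.nonempty_iff_ne_empty.2 hBe
  set x₀ : X := f ⟨b₀, hb₀⟩ with hx₀
  set φ : A → X := fun a => if h : a ∈ B then f ⟨a, h⟩ else x₀ with hφdef
  have hφ : ContinuousOn φ B := by
    rw [continuousOn_iff_continuous_restrict]
    convert hf using 1
    funext z
    simp only [Set.restrict_apply, φ, dif_pos z.2]
  obtain ⟨hCc, hCm, hCu, hCo⟩ := hC
  have hC' : IsKOmegaSeq A C := ⟨hCc, hCm, hCu, hCo⟩
  -- construct the stages
  have hstep := ane_step (A := A) hX x₀ hCc hCm hB hφ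
  set F : ∀ n : ℕ, KStage B φ (C n) :=
    fun n => Nat.rec
      ⟨∅, ∅, fun _ => x₀, isOpen_empty, empty_subset _, isCompact_empty,
        by simp, continuousOn_empty _, by simp [Set.EqOn]⟩
      (fun k sk => (hstep k sk).choose) n with hF
  have hlink : ∀ n, (F n).M ⊆ (F (n + 1)).O ∧ B ∩ C (n + 1) ⊆ (F (n + 1)).O ∧
      Set.EqOn (F (n + 1)).g (F n).g (F n).M := fun n => (hstep n (F n)).choose_spec
  set W : ℕ → Set A := fun n => (F n).O ∩ C n with hW
  have hWM : ∀ n, W n ⊆ (F n).M := fun n => (F n).hWM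
  have hMW : ∀ n, (F n).M ⊆ W (n + 1) := fun n =>
    subset_inter (hlink n).1 ((F n).hMC.trans (hCm (Nat.le_succ n)))
  have hWmono : Monotone W :=
    monotone_nat_of_le_succ fun n => (hWM n).trans (hMW n)
  have hMmono : ∀ m n, m ≤ n → (F m).M ⊆ (F n).M := by
    intro m n hmn
    induction n, hmn using Nat.le_induction with
    | base => exact subset_rfl
    | succ n hmn ih => exact ih.trans ((hMW n).trans (hWM (n + 1)))
  have hglink : ∀ m n, m ≤ n → Set.EqOn (F n).g (F m).g (F m).M := by
    intro m n hmn
    induction n, hmn using Nat.le_induction with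
    | base => exact fun a _ => rfl
    | succ n hmn ih =>
      intro a ha
      rw [(hlink n).2.2 (hMmono m n hmn ha)]
      exact ih ha
  set N : Set A := ⋃ n, W n with hN
  have hNopen : IsOpen N := kseq_open_iUnion hC' (fun n => (F n).hO) hWmono
  have hBN : B ⊆ N := by
    intro a ha
    have : a ∈ ⋃ n, C n := by rw [hCu]; trivial
    obtain ⟨n, hn⟩ := Set.mem_iUnion.1 this
    exact Set.mem_iUnion.2 ⟨n + 1, (hlink n).2.1 ⟨ha, hCm (Nat.le_succ n) hn⟩,
      hCm (Nat.le_succ n) hn⟩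
  set G : A → X := fun a => if h : ∃ n, a ∈ W n then (F (Nat.find h)).g a else x₀ with hG
  have hkey : ∀ (n : ℕ) (a : A), a ∈ W n → G a = (F n).g a := by
    intro n a ha
    have h : ∃ k, a ∈ W k := ⟨n, ha⟩
    have h1 : Nat.find h ≤ n := Nat.find_min' h ha
    have h2 : a ∈ W (Nat.find h) := Nat.find_spec h
    simp only [G, dif_pos h]
    exact (hglink (Nat.find h) n h1 (hWM _ h2)).symm
  have hGN : ContinuousOn G N := by
    rw [continuousOn_iff']
    intro V hV
    have hQ : ∀ n, ∃ Q : Set A, IsOpen Q ∧ (F n).g ⁻¹' V ∩ (F n).M = Q ∩ (F n).M :=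
      fun n => continuousOn_iff'.1 (F n).hg V hV
    choose Q hQo hQeq using hQ
    refine ⟨⋃ n, ((F n).O ∩ Q n) ∩ C n, ?_, ?_⟩
    · apply kseq_open_iUnion hC' (fun n => (F n).hO.inter (hQo n))
      intro m n hmn a ha
      have h1 : a ∈ W m := ⟨ha.1.1, ha.2⟩
      have h2 : a ∈ (F m).M := hWM m h1
      have h3 : a ∈ (F m).g ⁻¹' V :=
        ((Set.ext_iff.1 (hQeq m) a).2 ⟨ha.1.2, h2⟩).1
      have h4 : a ∈ W n := hWmono hmn h1
      have h5 : a ∈ (F n).M := hWM n h4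
      have h6 : (F n).g a ∈ V := by
        rw [hglink m n hmn h2, ← Set.mem_preimage]; exact h3
      have h7 : a ∈ Q n := ((Set.ext_iff.1 (hQeq n) a).1 ⟨h6, h5⟩).1
      exact ⟨⟨h4.1, h7⟩, h4.2⟩
    · apply Set.Subset.antisymm
      · rintro a ⟨haV, haN⟩
        obtain ⟨n, hn⟩ := Set.mem_iUnion.1 haN
        have h2 : a ∈ (F n).M := hWM n hn
        have h3 : (F n).g a ∈ V := by rw [← hkey n a hn]; exact haV
        have h7 : a ∈ Q n := ((Set.ext_iff.1 (hQeq n) a).1 ⟨h3, h2⟩).1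
        exact ⟨Set.mem_iUnion.2 ⟨n, ⟨hn.1, h7⟩, hn.2⟩, haN⟩
      · rintro a ⟨haU, haN⟩
        obtain ⟨n, hn⟩ := Set.mem_iUnion.1 haU
        have h1 : a ∈ W n := ⟨hn.1.1, hn.2⟩
        have h2 : a ∈ (F n).M := hWM n h1
        have h3 : a ∈ (F n).g ⁻¹' V := ((Set.ext_iff.1 (hQeq n) a).2 ⟨hn.1.2, h2⟩).1
        refine ⟨?_, haN⟩
        show G a ∈ V
        rw [hkey n a h1]
        exact h3
  refine ⟨N, hNopen, hBN, fun z => G z.1, ?_, ?_⟩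
  · exact continuousOn_iff_continuous_restrict.1 hGN
  · intro a haB haN
    obtain ⟨n, hn⟩ := Set.mem_iUnion.1 haN
    have h2 : a ∈ (F n).M := hWM n hn
    have hthis := (F n).hgφ ⟨haB, h2⟩
    show G a = f ⟨a, haB⟩
    rw [hkey n a hn, hthis, hφdef]
    simp only [dif_pos haB]

/- ## From compact metrizable ANE to compact Hausdorff ANE (needs submetrizability) -/

private lemma compact_metrizable_of_le {X : Type u} {t m : TopologicalSpace X} (hle : t ≤ m)
    (hm : @MetrizableSpace X m) {K : Set X} (hK : @IsCompact X t K) :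
    @MetrizableSpace K (@instTopologicalSpaceSubtype X (· ∈ K) t) := by
  set tK := @instTopologicalSpaceSubtype X (· ∈ K) t with htK
  set mK := @instTopologicalSpaceSubtype X (· ∈ K) m with hmK
  have cK : @CompactSpace K tK := (@isCompact_iff_compactSpace X t K).1 hK
  have t2K : @T2Space K mK :=
    @Topology.IsEmbedding.t2Space K X mK m (@t2Space_of_metrizableSpace X m hm) Subtype.val
      (@Topology.IsEmbedding.subtypeVal X m (· ∈ K))
  have hleK : tK ≤ mK := induced_mono hle
  have hcont' : @Continuous K K tK mK (Equiv.refl K) := @continuous_id_of_le K tK mK hleK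
  have homeo := @Continuous.homeoOfEquivCompactToT2 K K tK mK cK t2K (Equiv.refl K) hcont'
  have hmKi : @MetrizableSpace K mK := @MetrizableSpace.subtype X m hm K
  exact @Topology.IsEmbedding.metrizableSpace K K tK mK hmKi _
    (@Homeomorph.isEmbedding K K tK mK homeo)

private lemma sep_of_le {X : Type u} {t m : TopologicalSpace X} (hle : t ≤ m)
    (hm : @MetrizableSpace X m) (x x' : X) (h : x ≠ x') :
    ∃ g : X → ℝ, @Continuous X ℝ t _ g ∧ g x ≠ g x' := by
  letI := m
  haveI := hm
  letI : MetricSpace X := TopologicalSpace.metrizableSpaceMetric X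
  refine ⟨fun z => dist z x', ?_, ?_⟩
  · have h1 : @Continuous X ℝ m _ (fun z => dist z x') := by
      exact Continuous.dist continuous_id continuous_const
    exact @Continuous.comp X X ℝ t m inferInstance id (fun z => dist z x') h1
      (@continuous_id_of_le X t m hle)
  · simp only [dist_self]
    rw [dist_ne_zero]
    exact h

private lemma submetrizable_metrizable_subtype {X : Type u} [tX : TopologicalSpace X]
    (hXs : Submetrizable X) {K : Set X} (hK : IsCompact K) : MetrizableSpace K := by
  obtain ⟨m, hle, hm⟩ := hXs
  exact compact_metrizable_of_le hle hm hK

private lemma submetrizable_sep {X : Type u} [tX : TopologicalSpace X] (hXs : Submetrizable X)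
    (x x' : X) (h : x ≠ x') : ∃ g : X → ℝ, Continuous g ∧ g x ≠ g x' := by
  obtain ⟨m, hle, hm⟩ := hXs
  exact sep_of_le hle hm x x' h

/-- The Hilbert cube (at universe `u`). -/
private abbrev HCube : Type u := ℕ → ULift.{u} unitInterval

private lemma aneCM_to_aneCpt {X : Type u} [tX : TopologicalSpace X] (hXs : Submetrizable X)
    (hX : IsANEFor.{u, u} X fun A tA => @CompactSpace A tA ∧ @MetrizableSpace A tA) :
    ANECpt X := by
  classical
  intro x₀ A tA hcpt hT2 B hB φ hφ
  haveI := hcpt; haveI := hT2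
  by_cases hBe : B = ∅
  · exact ⟨∅, fun _ => x₀, isOpen_empty, by simp [hBe], continuousOn_empty _,
      by simp [hBe, Set.EqOn]⟩
  obtain ⟨b₀, hb₀⟩ := Set.nonempty_iff_ne_empty.2 hBe
  set K : Set X := φ '' B with hK
  have hKcpt : IsCompact K := (hB.isCompact).image_of_continuousOn hφ
  haveI : CompactSpace K := isCompact_iff_compactSpace.1 hKcpt
  haveI hKne : Nonempty K := ⟨⟨φ b₀, Set.mem_image_of_mem φ hb₀⟩⟩
  haveI : MetrizableSpace K := submetrizable_metrizable_subtype hXs hKcpt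
  letI : MetricSpace K := TopologicalSpace.metrizableSpaceMetric K
  obtain ⟨s, hs⟩ := TopologicalSpace.exists_dense_seq K
  -- the embedding of K into the Hilbert cube
  have hmem : ∀ (i : ℕ) (k : K), max 0 (min (dist k (s i)) 1) ∈ unitInterval :=
    fun i k => ⟨le_max_left _ _, max_le (zero_le_one) (min_le_right _ _)⟩
  have hd0 : ∀ (i : ℕ) (k : K), max 0 (min (dist k (s i)) 1) = min (dist k (s i)) 1 :=
    fun i k => max_eq_right (le_min dist_nonneg zero_le_one)
  set e : K → HCube.{u} := fun k i => ULift.up ⟨max 0 (min (dist k (s i)) 1), hmem i k⟩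
    with he
  have hecont : Continuous e := by
    apply continuous_pi
    intro i
    apply Continuous.comp continuous_uliftUp
    apply Continuous.subtype_mk
    exact continuous_const.max ((continuous_id.dist continuous_const).min continuous_const)
  have heinj : Function.Injective e := by
    intro x y hxy
    have hcoord : ∀ i, min (dist x (s i)) 1 = min (dist y (s i)) 1 := by
      intro i
      have := congrArg (fun q => ((q i).down : ℝ)) hxy
      simpa [he, hd0] using this
    apply eq_of_forall_dist_le
    intro ε hε
    obtain ⟨i, hi⟩ := Metric.denseRange_iff.1 hs x (min (ε / 2) (1 / 2)) (by positivity)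
    have hx1 : dist x (s i) < 1 := lt_of_lt_of_le hi ((min_le_right _ _).trans (by norm_num))
    have hxe : dist x (s i) ≤ ε / 2 := le_of_lt (lt_of_lt_of_le hi (min_le_left _ _))
    have h1 : min (dist x (s i)) 1 = dist x (s i) := min_eq_left hx1.le
    have h2 : min (dist y (s i)) 1 = dist x (s i) := by rw [← hcoord i, h1]
    have hy1 : dist y (s i) = dist x (s i) := by
      rcases le_or_gt (dist y (s i)) 1 with h | h
      · rwa [min_eq_left h] at h2
      · exfalso
        rw [min_eq_right h.le] at h2
        exact absurd (h2 ▸ hx1) (lt_irrefl _)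
    calc dist x y ≤ dist x (s i) + dist (s i) y := dist_triangle _ _ _
      _ = dist x (s i) + dist y (s i) := by rw [dist_comm (s i) y]
      _ ≤ ε / 2 + ε / 2 := by rw [hy1]; exact add_le_add hxe hxe
      _ = ε := add_halves ε
  have hembe : IsClosedEmbedding e := hecont.isClosedEmbedding heinj
  -- Tietze extension of the composite B → K → Hilbert cube over all of A
  have hres : ∀ i : ℕ, ∃ G : A → ℝ, Continuous G ∧
      ∀ b : B, G b = min (dist (⟨φ b, Set.mem_image_of_mem φ b.2⟩ : K) (s i)) 1 := by
    intro i
    have hφB : Continuous fun b : B => (⟨φ b, Set.mem_image_of_mem φ b.2⟩ : K) := by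
      apply Continuous.subtype_mk
      exact continuousOn_iff_continuous_restrict.1 hφ
    set fi : C(B, ℝ) := ⟨fun b => min (dist (⟨φ b, Set.mem_image_of_mem φ b.2⟩ : K) (s i)) 1,
      ((hφB.dist continuous_const).min continuous_const)⟩ with hfi
    obtain ⟨G, hG⟩ := fi.exists_restrict_eq hB
    refine ⟨G, G.continuous, fun b => ?_⟩
    have := congrArg (fun u => u b) hG
    simpa [hfi] using this
  choose G hGc hGb using hres
  set F : A → HCube.{u} := fun a i =>
    ULift.up ⟨max 0 (min (G i a) 1), ⟨le_max_left _ _, max_le zero_le_one (min_le_right _ _)⟩⟩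
    with hF
  have hFcont : Continuous F := by
    apply continuous_pi
    intro i
    apply Continuous.comp continuous_uliftUp
    apply Continuous.subtype_mk
    exact continuous_const.max ((hGc i).min continuous_const)
  have hFB : ∀ b : B, F b = e ⟨φ b, Set.mem_image_of_mem φ b.2⟩ := by
    intro b
    funext i
    have h1 := hGb i b
    have h2 : (0 : ℝ) ≤ min (dist (⟨φ b, Set.mem_image_of_mem φ b.2⟩ : K) (s i)) 1 :=
      le_min dist_nonneg zero_le_one
    have h3 : min (min (dist (⟨φ b, Set.mem_image_of_mem φ b.2⟩ : K) (s i)) 1) 1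
        = min (dist (⟨φ b, Set.mem_image_of_mem φ b.2⟩ : K) (s i)) 1 :=
      min_eq_left (min_le_right _ _)
    refine congrArg ULift.up (Subtype.ext ?_)
    rw [h1]
    exact congrArg (fun r => (0 : ℝ) ⊔ r) h3
  -- the partial inverse of `e`, defined on `range e`
  set hcube_ret : HCube.{u} → X := fun q => if hq : ∃ k : K, e k = q then (hq.choose : X) else x₀
    with hret
  have hretk : ∀ k : K, hcube_ret (e k) = (k : X) := by
    intro k
    have hq : ∃ k' : K, e k' = e k := ⟨k, rfl⟩
    simp only [hcube_ret, dif_pos hq]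
    exact congrArg _ (heinj hq.choose_spec)
  have hretcont : ContinuousOn hcube_ret (Set.range e) := by
    rw [continuousOn_iff_continuous_restrict]
    set heq := Topology.IsEmbedding.toHomeomorph (f := e) hembe.isEmbedding with heqdef
    have : (Set.range e).restrict hcube_ret = fun z => ((heq.symm z : K) : X) := by
      funext z
      have h1 : e (heq.symm z) = (z : HCube.{u}) := congrArg Subtype.val (heq.apply_symm_apply z)
      show hcube_ret z = _
      rw [← h1, hretk]
    convert continuous_subtype_val.comp heq.symm.continuous using 1
    exact this
  -- apply the compact-metrizable ANE property in the Hilbert cube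
  obtain ⟨N'', ψ'', hN''o, hrangeN'', hψ''c, hψ''eq⟩ :=
    ane_total hX x₀ (HCube.{u}) ⟨inferInstance, inferInstance⟩ (Set.range e)
      hembe.isClosed_range hcube_ret hretcont
  refine ⟨F ⁻¹' N'', ψ'' ∘ F, hN''o.preimage hFcont, ?_, ?_, ?_⟩
  · intro b hb
    show F b ∈ N''
    rw [hFB ⟨b, hb⟩]
    exact hrangeN'' (Set.mem_range_self _)
  · exact ContinuousOn.comp hψ''c hFcont.continuousOn (fun a ha => ha)
  · intro b hb
    show ψ'' (F b) = φ b
    rw [hFB ⟨b, hb⟩, hψ''eq (Set.mem_range_self _), hretk]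

/- ## Easy directions -/

private lemma aneKw_to_anrkw {X : Type u} [TopologicalSpace X] (hXk : IsKOmega X)
    (hX : IsANEFor.{u, u} X fun A tA => @IsKOmega A tA) : IsANRkw.{u, u} X := by
  refine ⟨hXk, ?_⟩
  intro Y tY hY e he
  set heq := Topology.IsEmbedding.toHomeomorph (f := e) he.toIsEmbedding with heqd
  obtain ⟨N, hNo, hBN, g, hg, hgf⟩ := hX Y hY (Set.range e) he.isClosed_range
    (fun z => heq.symm z) heq.symm.continuous
  refine ⟨N, fun y hy => hNo.mem_nhds (hBN hy), fun z => e (g z),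
    he.continuous.comp hg, fun z => Set.mem_range_self _, ?_⟩
  intro z hz
  have h1 : g z = heq.symm ⟨z.1, hz⟩ := hgf z.1 hz z.2
  have h2 : (heq (heq.symm ⟨z.1, hz⟩) : Y) = z.1 := by rw [heq.apply_symm_apply]
  show e (g z) = z.1
  rw [h1]
  exact h2

private lemma cm_isKOmega {A : Type u} [tA : TopologicalSpace A] (h1 : CompactSpace A)
    (h2 : MetrizableSpace A) : IsKOmega A := by
  refine ⟨inferInstance, fun _ => Set.univ, fun _ => isCompact_univ, monotone_const,
    Set.iUnion_const _, fun U => ⟨fun hU _ => hU.preimage continuous_subtype_val, fun h => ?_⟩⟩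
  have h0 := h 0
  have hUeq : U = (fun a : A => (⟨a, Set.mem_univ a⟩ : (Set.univ : Set A))) ⁻¹'
      (Subtype.val ⁻¹' U) := by
    ext a; simp
  rw [hUeq]
  exact h0.preimage (Continuous.subtype_mk continuous_id _)

private lemma aneKw_to_aneCM {X : Type u} [TopologicalSpace X]
    (hX : IsANEFor.{u, u} X fun A tA => @IsKOmega A tA) :
    IsANEFor.{u, u} X fun A tA => @CompactSpace A tA ∧ @MetrizableSpace A tA :=
  fun A tA hA => hX A (cm_isKOmega hA.1 hA.2)

/- ## From ANR(k_ω) to compact metrizable ANE, via adjunction spaces -/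

private def adjRel {A X : Type u} (B : Set A) (f : B → X) : (A ⊕ X) → (A ⊕ X) → Prop :=
  fun p q => ∃ b : A, ∃ hb : b ∈ B, p = Sum.inl b ∧ q = Sum.inr (f ⟨b, hb⟩)

private def adjLift {A X : Type u} {Z : Type v} {B : Set A} {f : B → X} (g : X → Z) (h : A → Z)
    (hcomp : ∀ (b : A) (hb : b ∈ B), h b = g (f ⟨b, hb⟩)) : Quot (adjRel B f) → Z :=
  Quot.lift (Sum.elim h g) (by
    rintro p q ⟨b, hb, rfl, rfl⟩
    simpa using hcomp b hb)

private lemma adjLift_e {A X : Type u} {Z : Type v} {B : Set A} {f : B → X} (g : X → Z)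
    (h : A → Z) (hcomp : ∀ (b : A) (hb : b ∈ B), h b = g (f ⟨b, hb⟩)) (x : X) :
    adjLift g h hcomp (Quot.mk _ (Sum.inr x)) = g x := rfl

private lemma adjLift_j {A X : Type u} {Z : Type v} {B : Set A} {f : B → X} (g : X → Z)
    (h : A → Z) (hcomp : ∀ (b : A) (hb : b ∈ B), h b = g (f ⟨b, hb⟩)) (a : A) :
    adjLift g h hcomp (Quot.mk _ (Sum.inl a)) = h a := rfl

private lemma adjLift_continuous {A X : Type u} {Z : Type v} [TopologicalSpace A]
    [TopologicalSpace X] [TopologicalSpace Z] {B : Set A} {f : B → X} {g : X → Z} {h : A → Z}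
    (hcomp : ∀ (b : A) (hb : b ∈ B), h b = g (f ⟨b, hb⟩)) (hg : Continuous g)
    (hh : Continuous h) : Continuous (adjLift g h hcomp) :=
  continuous_quot_lift _ (hh.sumElim hg)

private lemma t2_of_sep {Y : Type u} [TopologicalSpace Y]
    (h : ∀ y₁ y₂ : Y, y₁ ≠ y₂ → ∃ φ : Y → ℝ, Continuous φ ∧ φ y₁ ≠ φ y₂) : T2Space Y :=
  ⟨fun y₁ y₂ hne => by
    obtain ⟨φ, hφ, hneq⟩ := h y₁ y₂ hne
    exact separated_by_continuous hφ hneq⟩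

private lemma anrkw_to_aneCM {X : Type u} [tX : TopologicalSpace X] (hXs : Submetrizable X)
    (hX : IsANRkw.{u, u} X) :
    IsANEFor.{u, u} X fun A tA => @CompactSpace A tA ∧ @MetrizableSpace A tA := by
  classical
  obtain ⟨hXk, hret⟩ := hX
  obtain ⟨hXT2, D, hDc, hDm, hDu, hDo⟩ := hXk
  haveI := hXT2
  intro A tA hA B hB f hf
  obtain ⟨hcptA, hmA⟩ := hA
  haveI := hcptA
  haveI := hmA
  by_cases hBe : B = ∅
  · subst hBe
    refine ⟨∅, isOpen_empty, subset_rfl, fun z => absurd z.2 (Set.notMem_empty _), ?_, ?_⟩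
    · exact continuous_iff_continuousAt.2 fun z => absurd z.2 (Set.notMem_empty _)
    · intro a hB' _; exact absurd hB' (Set.notMem_empty _)
  obtain ⟨b₀, hb₀⟩ := Set.nonempty_iff_ne_empty.2 hBe
  letI : MetricSpace A := TopologicalSpace.metrizableSpaceMetric A
  -- the adjunction space
  set Y := Quot (adjRel B f) with hYdef
  set qm : A ⊕ X → Y := Quot.mk (adjRel B f) with hqm
  set e : X → Y := fun x => qm (Sum.inr x) with hedef
  set j : A → Y := fun a => qm (Sum.inl a) with hjdef
  have hqc : Continuous qm := continuous_quot_mk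
  have hec : Continuous e := hqc.comp continuous_inr
  have hjc : Continuous j := hqc.comp continuous_inl
  have hjB : ∀ (b : A) (hb : b ∈ B), j b = e (f ⟨b, hb⟩) :=
    fun b hb => Quot.sound ⟨b, hb, rfl, rfl⟩
  -- a retraction-like lift used to distinguish points
  set ρ : Y → A ⊕ X := adjLift (B := B) (f := f) Sum.inr
    (fun a => if h : a ∈ B then Sum.inr (f ⟨a, h⟩) else Sum.inl a)
    (fun b hb => dif_pos hb) with hρ
  have hρe : ∀ x, ρ (e x) = Sum.inr x := fun x => rfl
  have hρj : ∀ a, a ∉ B → ρ (j a) = Sum.inl a := fun a ha => by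
    show (if h : a ∈ B then Sum.inr (f ⟨a, h⟩) else Sum.inl a) = Sum.inl a
    exact dif_neg ha
  have heinj : Function.Injective e := by
    intro x x' hxx
    have := congrArg ρ hxx
    rw [hρe, hρe] at this
    exact Sum.inr_injective this
  have hjnotB : ∀ (a : A), a ∉ B → ∀ x, j a ≠ e x := by
    intro a ha x hcontra
    have := congrArg ρ hcontra
    rw [hρj a ha, hρe] at this
    exact Sum.inl_ne_inr this
  have hjinj : ∀ (a a' : A), a ∉ B → a' ∉ B → j a = j a' → a = a' := by
    intro a a' ha ha' hjj
    have := congrArg ρ hjj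
    rw [hρj a ha, hρj a' ha'] at this
    exact Sum.inl_injective this
  -- representatives
  have hrep : ∀ y : Y, (∃ x : X, y = e x) ∨ (∃ a : A, a ∉ B ∧ y = j a) := by
    intro y
    induction y using Quot.ind with
    | _ p =>
      cases p with
      | inl a =>
        by_cases ha : a ∈ B
        · exact Or.inl ⟨f ⟨a, ha⟩, (hjB a ha)⟩
        · exact Or.inr ⟨a, ha, rfl⟩
      | inr x => exact Or.inl ⟨x, rfl⟩
  -- Y is Hausdorff
  have hsep1 : ∀ x x' : X, x ≠ x' → ∃ φ : Y → ℝ, Continuous φ ∧ φ (e x) ≠ φ (e x') := by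
    intro x x' hne
    obtain ⟨g0, hg0c, hg0ne⟩ := submetrizable_sep hXs x x' hne
    obtain ⟨h0, hh0⟩ := ContinuousMap.exists_restrict_eq (Y := ℝ) hB ⟨fun b => g0 (f b), hg0c.comp hf⟩
    have hcomp : ∀ (b : A) (hb : b ∈ B), h0 b = g0 (f ⟨b, hb⟩) := by
      intro b hb
      have := congrArg (fun u => u ⟨b, hb⟩) hh0
      simpa using this
    exact ⟨adjLift g0 h0 hcomp, adjLift_continuous hcomp hg0c h0.continuous, by
      rw [adjLift_e, adjLift_e]; exact hg0ne⟩
  have hsep2 : ∀ (x : X) (a : A), a ∉ B → ∃ φ : Y → ℝ, Continuous φ ∧ φ (e x) ≠ φ (j a) := by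
    intro x a ha
    have hcomp : ∀ (b : A) (hb : b ∈ B), Metric.infDist b B = (fun _ : X => (0 : ℝ)) (f ⟨b, hb⟩) :=
      fun b hb => Metric.infDist_zero_of_mem hb
    refine ⟨adjLift (fun _ => (0 : ℝ)) (fun z => Metric.infDist z B) hcomp,
      adjLift_continuous hcomp continuous_const (Metric.continuous_infDist_pt _), ?_⟩
    rw [adjLift_e, adjLift_j]
    have hpos : 0 < Metric.infDist a B := (hB.notMem_iff_infDist_pos ⟨b₀, hb₀⟩).1 ha
    exact (ne_of_lt hpos)
  have hsep3 : ∀ (a a' : A), a ∉ B → a' ∉ B → a ≠ a' →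
      ∃ φ : Y → ℝ, Continuous φ ∧ φ (j a) ≠ φ (j a') := by
    intro a a' ha ha' hne
    have hcl : IsClosed (B ∪ {a'}) := hB.union isClosed_singleton
    have hcomp : ∀ (b : A) (hb : b ∈ B),
        Metric.infDist b (B ∪ {a'}) = (fun _ : X => (0 : ℝ)) (f ⟨b, hb⟩) :=
      fun b hb => Metric.infDist_zero_of_mem (Or.inl hb)
    refine ⟨adjLift (fun _ => (0 : ℝ)) (fun z => Metric.infDist z (B ∪ {a'})) hcomp,
      adjLift_continuous hcomp continuous_const (Metric.continuous_infDist_pt _), ?_⟩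
    rw [adjLift_j, adjLift_j]
    have hpos : 0 < Metric.infDist a (B ∪ {a'}) := by
      apply (hcl.notMem_iff_infDist_pos ⟨a', Or.inr rfl⟩).1
      rintro (h | h)
      · exact ha h
      · exact hne (by simpa using h)
    have hz : Metric.infDist a' (B ∪ {a'}) = 0 := Metric.infDist_zero_of_mem (Or.inr rfl)
    rw [hz]
    exact ne_of_gt hpos
  haveI hT2Y : T2Space Y := by
    apply t2_of_sep
    intro y₁ y₂ hne
    rcases hrep y₁ with ⟨x₁, rfl⟩ | ⟨a₁, ha₁, rfl⟩ <;>
      rcases hrep y₂ with ⟨x₂, rfl⟩ | ⟨a₂, ha₂, rfl⟩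
    · exact hsep1 x₁ x₂ (fun h => hne (congrArg e h))
    · exact hsep2 x₁ a₂ ha₂
    · obtain ⟨φ, hφ, hφne⟩ := hsep2 x₂ a₁ ha₁
      exact ⟨φ, hφ, hφne.symm⟩
    · exact hsep3 a₁ a₂ ha₁ ha₂ (fun h => hne (congrArg j h))
  -- Y is a k_ω-space
  have hYkw : IsKOmega Y := by
    refine ⟨hT2Y, fun n => Set.range j ∪ e '' D n, fun n => ?_, ?_, ?_, ?_⟩
    · exact (isCompact_range hjc).union ((hDc n).image hec)
    · intro m n hmn
      exact Set.union_subset_union subset_rfl (Set.image_mono (hDm hmn))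
    · apply Set.eq_univ_of_forall
      intro y
      rcases hrep y with ⟨x, rfl⟩ | ⟨a, _, rfl⟩
      · have : x ∈ ⋃ n, D n := by rw [hDu]; trivial
        obtain ⟨n, hn⟩ := Set.mem_iUnion.1 this
        exact Set.mem_iUnion.2 ⟨n, Or.inr (Set.mem_image_of_mem e hn)⟩
      · exact Set.mem_iUnion.2 ⟨0, Or.inl (Set.mem_range_self a)⟩
    · intro U
      constructor
      · exact fun hU _ => hU.preimage continuous_subtype_val
      · intro h
        have hqU : IsOpen (qm ⁻¹' U) → IsOpen U := by
          intro hh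
          exact (isQuotientMap_quot_mk).isOpen_preimage.1 hh
        apply hqU
        rw [isOpen_sum_iff]
        constructor
        · -- the A-part, via level 0
          have hj0 : Continuous (fun a : A =>
              (⟨j a, Or.inl (Set.mem_range_self a)⟩ : (Set.range j ∪ e '' D 0 : Set Y))) :=
            Continuous.subtype_mk hjc _
          exact (h 0).preimage hj0
        · -- the X-part, via the k_ω-structure of X
          rw [hDo]
          intro n
          have hι : Continuous (fun z : D n =>
              (⟨e z.1, Or.inr (Set.mem_image_of_mem e z.2)⟩ :
                (Set.range j ∪ e '' D n : Set Y))) :=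
            Continuous.subtype_mk (hec.comp continuous_subtype_val) _
          exact (h n).preimage hι
  -- e is a closed embedding
  have hee : IsClosedEmbedding e := by
    apply IsClosedEmbedding.of_continuous_injective_isClosedMap hec heinj
    intro S hS
    have hmain : IsClosed (qm ⁻¹' (e '' S)) := by
      rw [isClosed_sum_iff]
      constructor
      · have hTeq : Sum.inl ⁻¹' (qm ⁻¹' (e '' S)) = Subtype.val '' (f ⁻¹' S) := by
          ext a
          simp only [Set.mem_preimage, Set.mem_image]
          constructor
          · rintro ⟨x, hxS, hx⟩
            by_cases ha : a ∈ B
            · refine ⟨⟨a, ha⟩, ?_, rfl⟩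
              have hja : j a = e x := hx.symm
              rw [hjB a ha] at hja
              show f ⟨a, ha⟩ ∈ S
              rw [heinj hja]
              exact hxS
            · exact absurd hx.symm (hjnotB a ha x)
          · rintro ⟨b, hbS, rfl⟩
            exact ⟨f b, hbS, (hjB b b.2).symm⟩
        rw [hTeq]
        exact hB.isClosedEmbedding_subtypeVal.isClosedMap _ (hS.preimage hf)
      · have hSeq : Sum.inr ⁻¹' (qm ⁻¹' (e '' S)) = S := by
          ext x
          simp only [Set.mem_preimage, Set.mem_image]
          constructor
          · rintro ⟨x', hx'S, hx'⟩
            rwa [← heinj hx']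
          · intro hx
            exact ⟨x, hx, rfl⟩
        rw [hSeq]
        exact hS
    exact (isQuotientMap_quot_mk).isClosed_preimage.1 hmain
  -- apply the ANR(k_ω) property
  obtain ⟨N, hN, r, hrc, hrrange, hrid⟩ := hret Y hYkw e hee
  have hNint : Set.range e ⊆ interior N := fun y hy => mem_interior_iff_mem_nhds.2 (hN y hy)
  set heqe := Topology.IsEmbedding.toHomeomorph (f := e) hee.toIsEmbedding with heqed
  refine ⟨j ⁻¹' interior N, isOpen_interior.preimage hjc, ?_, ?_, ?_, ?_⟩
  · intro b hb
    show j b ∈ interior N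
    rw [hjB b hb]
    exact hNint (Set.mem_range_self _)
  · exact fun z => heqe.symm ⟨r ⟨j z.1, interior_subset z.2⟩, hrrange _⟩
  · apply heqe.symm.continuous.comp
    apply Continuous.subtype_mk
    apply hrc.comp
    exact Continuous.subtype_mk (hjc.comp continuous_subtype_val) _
  · intro a haB haN
    have hmem : j a ∈ Set.range e := by
      rw [hjB a haB]; exact Set.mem_range_self _
    have hr : r ⟨j a, interior_subset haN⟩ = j a := hrid _ hmem
    have hw : (⟨r ⟨j a, interior_subset haN⟩, hrrange _⟩ : Set.range e) = heqe (f ⟨a, haB⟩) := by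
      apply Subtype.ext
      show r ⟨j a, interior_subset haN⟩ = (heqe (f ⟨a, haB⟩) : Y)
      rw [hr, hjB a haB]
      rfl
    show heqe.symm ⟨r ⟨j a, interior_subset haN⟩, hrrange _⟩ = f ⟨a, haB⟩
    rw [hw, Homeomorph.symm_apply_apply]

/-- Characterization of submetrizable `ANR(k_ω)`-spaces: for a submetrizable `k_ω`-space `X`,
being an `ANR(k_ω)` is equivalent to being an ANE for the class of `k_ω`-spaces, which in turn
is equivalent to being an ANE for the class of compact metrizable spaces. -/
theorem ANRkw_characterization
    (X : Type u) [TopologicalSpace X] (hXk : IsKOmega X) (hXs : Submetrizable X) :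
    (IsANRkw.{u, u} X ↔ IsANEFor.{u, u} X fun A tA => @IsKOmega A tA) ∧
    ((IsANEFor.{u, u} X fun A tA => @IsKOmega A tA) ↔
      IsANEFor.{u, u} X fun A tA => @CompactSpace A tA ∧ @MetrizableSpace A tA) := by
  constructor
  · constructor
    · intro h1
      exact aneCpt_to_kOmega (aneCM_to_aneCpt hXs (anrkw_to_aneCM hXs h1))
    · intro h2
      exact aneKw_to_anrkw hXk h2
  · constructor
    · intro h2
      exact aneKw_to_aneCM h2
    · intro h3
      exact aneCpt_to_kOmega (aneCM_to_aneCpt hXs h3)
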